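/- For all natural numbers m, n ≥ 1, the sum over all pairs (i,j) with 0 ≤ i ≤ m, 0 ≤ j ≤ n, and i+j even, of (-1)^j · 2^{-(δ_{i,0}+δ_{i,m}+δ_{j,0}+δ_{j,n})}, equals zero. Here δ denotes the Kronecker delta. -/
import Mathlib

/-- Auxiliary: the alternating boundary-weighted sum vanishes. -/
lemma alt_sum_zero (n : ℕ) (hn : 1 ≤ n) :
    ∑ j ∈ Finset.range (n + 1), (-1 : ℚ) ^ j *
      (2 : ℚ) ^ (-(((if j = 0 then 1 else 0) + (if j = n then 1 else 0) : ℤ))) = 0 := by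
  induction n with
  | zero => omega
  | succ k ih =>
    rcases Nat.lt_or_ge k 1 with hk | hk
    · interval_cases k
      norm_num [Finset.sum_range_succ]
    · have ih' := ih hk
      rw [Finset.sum_range_succ] at ih'
      rw [Finset.sum_range_succ, Finset.sum_range_succ]
      have e1 : ∀ j ∈ Finset.range k, (-1 : ℚ) ^ j *
          (2 : ℚ) ^ (-(((if j = 0 then 1 else 0) + (if j = k + 1 then 1 else 0) : ℤ)))
          = (-1 : ℚ) ^ j *
          (2 : ℚ) ^ (-(((if j = 0 then 1 else 0) + (if j = k then 1 else 0) : ℤ))) := by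
        intro j hj
        rw [Finset.mem_range] at hj
        have h1 : j ≠ k + 1 := by omega
        have h2 : j ≠ k := by omega
        simp [h1, h2]
      rw [Finset.sum_congr rfl e1]
      have hk0 : k ≠ 0 := by omega
      have hkk1 : k ≠ k + 1 := by omega
      have hk10 : k + 1 ≠ 0 := by omega
      simp only [hk0, hkk1, hk10, if_false, if_true, if_neg, if_pos] at ih' ⊢
      norm_num at ih' ⊢
      have hp : (-1 : ℚ) ^ (k + 1) = -(-1 : ℚ) ^ k := by ring
      rw [hp]
      linarith

theorem even_lattice_sum_eq_zero (m n : ℕ) (hm : 1 ≤ m) (hn : 1 ≤ n) :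
    ∑ p ∈ (Finset.range (m + 1) ×ˢ Finset.range (n + 1)).filter
        (fun p => (p.1 + p.2) % 2 = 0),
      (-1 : ℚ) ^ p.2 *
        (2 : ℚ) ^ (-(((if p.1 = 0 then 1 else 0) + (if p.1 = m then 1 else 0) +
            (if p.2 = 0 then 1 else 0) + (if p.2 = n then 1 else 0) : ℤ))) = 0 := by
  rw [Finset.sum_filter, Finset.sum_product]
  have key : ∀ i ∈ Finset.range (m + 1), ∀ j ∈ Finset.range (n + 1),
      (if (i + j) % 2 = 0 then
        (-1 : ℚ) ^ j *
        (2 : ℚ) ^ (-(((if i = 0 then 1 else 0) + (if i = m then 1 else 0) +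
            (if j = 0 then 1 else 0) + (if j = n then 1 else 0) : ℤ))) else 0)
      = (1/2 : ℚ) * ((2 : ℚ) ^ (-(((if i = 0 then 1 else 0) + (if i = m then 1 else 0) : ℤ)))
          * ((-1 : ℚ) ^ j * (2 : ℚ) ^ (-(((if j = 0 then 1 else 0) + (if j = n then 1 else 0) : ℤ)))))
      + (1/2 : ℚ) * (((-1 : ℚ) ^ i * (2 : ℚ) ^ (-(((if i = 0 then 1 else 0) + (if i = m then 1 else 0) : ℤ))))
          * (2 : ℚ) ^ (-(((if j = 0 then 1 else 0) + (if j = n then 1 else 0) : ℤ)))) := by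
    intro i _ j _
    have hsplit : (2 : ℚ) ^ (-(((if i = 0 then 1 else 0) + (if i = m then 1 else 0) +
            (if j = 0 then 1 else 0) + (if j = n then 1 else 0) : ℤ)))
        = (2 : ℚ) ^ (-(((if i = 0 then 1 else 0) + (if i = m then 1 else 0) : ℤ)))
          * (2 : ℚ) ^ (-(((if j = 0 then 1 else 0) + (if j = n then 1 else 0) : ℤ))) := by
      rw [← zpow_add₀ (by norm_num : (2:ℚ) ≠ 0)]
      ring_nf
    rw [hsplit]
    rcases Nat.even_or_odd (i + j) with he | ho
    · have h0 : (i + j) % 2 = 0 := Nat.even_iff.mp he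
      rw [if_pos h0]
      have hij : (-1 : ℚ) ^ i * (-1 : ℚ) ^ j = 1 := by
        rw [← pow_add]; exact he.neg_one_pow
      have : (-1 : ℚ) ^ i = (-1 : ℚ) ^ j := by
        rcases Nat.even_or_odd i with hi | hi
        · have hj : Even j := by
            rcases Nat.even_or_odd j with h | h; · exact h
            · exact absurd (hi.add_odd h) (Nat.not_odd_iff_even.mpr he)
          rw [hi.neg_one_pow, hj.neg_one_pow]
        · have hj : Odd j := by
            rcases Nat.even_or_odd j with h | h
            · exact absurd (hi.add_even h) (Nat.not_odd_iff_even.mpr he)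
            · exact h
          rw [hi.neg_one_pow, hj.neg_one_pow]
      rw [this]
      have hjj : (-1 : ℚ) ^ j * (-1 : ℚ) ^ j = 1 := by
        rw [← pow_add]; exact (Even.add_self j).neg_one_pow
      nlinarith [hjj]
    · have h0 : ¬ (i + j) % 2 = 0 := by
        rw [Nat.odd_iff] at ho; omega
      rw [if_neg h0]
      have hsum : (-1 : ℚ) ^ i = -(-1 : ℚ) ^ j := by
        rcases Nat.even_or_odd i with hi | hi
        · have hj : Odd j := by
            rw [Nat.even_iff] at hi; rw [Nat.odd_iff] at ho ⊢; omega
          rw [hi.neg_one_pow, hj.neg_one_pow]; ring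
        · have hj : Even j := by
            rw [Nat.odd_iff] at hi ho; rw [Nat.even_iff]; omega
          rw [hi.neg_one_pow, hj.neg_one_pow]
      rw [hsum]; ring
  calc ∑ i ∈ Finset.range (m + 1), ∑ j ∈ Finset.range (n + 1),
      (if (i + j) % 2 = 0 then
        (-1 : ℚ) ^ j *
        (2 : ℚ) ^ (-(((if i = 0 then 1 else 0) + (if i = m then 1 else 0) +
            (if j = 0 then 1 else 0) + (if j = n then 1 else 0) : ℤ))) else 0)
      = ∑ i ∈ Finset.range (m + 1), ∑ j ∈ Finset.range (n + 1),
        ((1/2 : ℚ) * ((2 : ℚ) ^ (-(((if i = 0 then 1 else 0) + (if i = m then 1 else 0) : ℤ)))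
          * ((-1 : ℚ) ^ j * (2 : ℚ) ^ (-(((if j = 0 then 1 else 0) + (if j = n then 1 else 0) : ℤ)))))
      + (1/2 : ℚ) * (((-1 : ℚ) ^ i * (2 : ℚ) ^ (-(((if i = 0 then 1 else 0) + (if i = m then 1 else 0) : ℤ))))
          * (2 : ℚ) ^ (-(((if j = 0 then 1 else 0) + (if j = n then 1 else 0) : ℤ))))) := by
        refine Finset.sum_congr rfl fun i hi => Finset.sum_congr rfl fun j hj => ?_
        exact key i hi j hj
    _ = 0 := by
        simp only [Finset.sum_add_distrib]
        have part1 : ∀ i ∈ Finset.range (m + 1), ∑ j ∈ Finset.range (n + 1),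
            (1/2 : ℚ) * ((2 : ℚ) ^ (-(((if i = 0 then 1 else 0) + (if i = m then 1 else 0) : ℤ)))
              * ((-1 : ℚ) ^ j * (2 : ℚ) ^ (-(((if j = 0 then 1 else 0) + (if j = n then 1 else 0) : ℤ))))) = 0 := by
          intro i _
          rw [← Finset.mul_sum, ← Finset.mul_sum, alt_sum_zero n hn, mul_zero, mul_zero]
        rw [Finset.sum_congr rfl part1, Finset.sum_const, smul_zero, zero_add]
        rw [Finset.sum_comm]
        have part2 : ∀ j ∈ Finset.range (n + 1), ∑ i ∈ Finset.range (m + 1),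
            (1/2 : ℚ) * (((-1 : ℚ) ^ i * (2 : ℚ) ^ (-(((if i = 0 then 1 else 0) + (if i = m then 1 else 0) : ℤ))))
              * (2 : ℚ) ^ (-(((if j = 0 then 1 else 0) + (if j = n then 1 else 0) : ℤ)))) = 0 := by
          intro j _
          have : ∀ i ∈ Finset.range (m + 1),
              (1/2 : ℚ) * (((-1 : ℚ) ^ i * (2 : ℚ) ^ (-(((if i = 0 then 1 else 0) + (if i = m then 1 else 0) : ℤ))))
                * (2 : ℚ) ^ (-(((if j = 0 then 1 else 0) + (if j = n then 1 else 0) : ℤ))))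
              = ((-1 : ℚ) ^ i * (2 : ℚ) ^ (-(((if i = 0 then 1 else 0) + (if i = m then 1 else 0) : ℤ))))
                * ((1/2 : ℚ) * (2 : ℚ) ^ (-(((if j = 0 then 1 else 0) + (if j = n then 1 else 0) : ℤ)))) := by
            intro i _; ring
          rw [Finset.sum_congr rfl this, ← Finset.sum_mul, alt_sum_zero m hm, zero_mul]
        rw [Finset.sum_congr rfl part2, Finset.sum_const, smul_zero]
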